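/- Let H₁, H₂ be Hilbert spaces, C : dom C ⊆ H₂ → H₁ a densely defined closed linear operator, and 𝔫 ∈ L(H₂) with Re⟨𝔫φ,φ⟩ ≥ κ‖φ‖² for all φ ∈ H₂ and some κ > 0. For λ = ν + ik with ν > 0 fixed and k ∈ ℝ, suppose U = (u₁,u₂) ∈ dom C* × dom C solves λu₁ + Cu₂ = f₁ and 𝔫u₂ - C*u₁ = f₂. Then ‖λu₁‖_{H₁} + ‖λ^{1/2}u₂‖_{H₂} + ‖λ^{1/2}C*u₁‖_{H₂} + ‖Cu₂‖_{H₁} ≤ C₀(‖f₁‖_{H₁} + ‖λ^{1/2}f₂‖_{H₂}) for a constant C₀ depending only on κ, ν and ‖𝔫‖. -/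

import Mathlib

set_option maxHeartbeats 4000000

open Complex
noncomputable def stmt17c2 (κ ν Mn : ℝ) : ℝ := 11 * (Mn + κ + ν + 1)^2 / κ^3

noncomputable def stmt17K3 (κ ν Mn : ℝ) : ℝ := Mn * stmt17c2 κ ν Mn + stmt17c2 κ ν Mn / 2 + 1/2

noncomputable def stmt17C0 (κ ν Mn : ℝ) : ℝ :=
  4 + 2 * stmt17K3 κ ν Mn + (Mn + 1) * Real.sqrt (stmt17c2 κ ν Mn)

lemma stmt17aux (κ ν Mn a b cv w F G s : ℝ) (hκ : 0 < κ) (hν : 0 < ν) (hMn : 0 < Mn)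
    (ha : 0 ≤ a) (hb : 0 ≤ b) (hcv : 0 ≤ cv) (hw : 0 ≤ w) (hF : 0 ≤ F) (hG : 0 ≤ G)
    (hs : 0 < s) (hνs : ν ≤ s^2)
    (h1 : ν*a^2 + κ*b^2 ≤ F*a + G*b)
    (h2 : s^2*κ*b^2 ≤ 2*ν*Mn*b^2 + F*cv + s^2*G*b)
    (h3 : cv^2 ≤ s^2*Mn*b^2 + F*cv + s^2*G*b)
    (h4 : s^2*a ≤ F + cv)
    (h5 : w ≤ Mn*b + G) :
    s^2*a + s*b + s*w + cv ≤ stmt17C0 κ ν Mn * (F + s*G) := by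
  set T := F + s*G with hT
  have hGT : s*G ≤ T := by nlinarith
  have hFT : F ≤ T := by nlinarith
  have hT0 : 0 ≤ T := by nlinarith
  have hF2 : F^2 ≤ T^2 := by nlinarith
  have hG2 : ν*G^2 ≤ T^2 := by
    nlinarith [mul_le_mul_of_nonneg_right hνs (sq_nonneg G),
      mul_self_le_mul_self (by positivity : (0:ℝ) ≤ s*G) hGT]
  set D := Mn + κ + ν + 1 with hD
  have hD0 : 0 < D := by positivity
  have hκD : κ ≤ D := by nlinarith
  have hMnD : Mn ≤ D := by nlinarith
  have hD1 : (1:ℝ) ≤ D := by nlinarith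
  have hDκ1 : κ + 1 ≤ D := by nlinarith
  clear_value T D
  -- b² bound
  have hb2' : ν*κ^2*b^2 ≤ κ*F^2 + ν*G^2 := by
    nlinarith [mul_nonneg hκ.le (sq_nonneg (ν*a - F)), mul_nonneg hν.le (sq_nonneg (κ*b - G)),
      mul_le_mul_of_nonneg_left h1 (by positivity : (0:ℝ) ≤ 2*ν*κ),
      mul_nonneg (by positivity : (0:ℝ) ≤ ν^2*κ) (sq_nonneg a)]
  have hb2 : ν*κ^2*b^2 ≤ (κ+1)*T^2 := by
    have := mul_le_mul_of_nonneg_left hF2 hκ.le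
    linarith [hG2]
  -- F·cv bound
  have hFcv : 15*D*κ*(F*cv) ≤ κ^2*(s^2*Mn*b^2) + κ^2*(s^2*G*b) + 64*D^2*F^2 := by
    nlinarith [sq_nonneg (κ*cv - 8*D*F), mul_le_mul_of_nonneg_left h3 (sq_nonneg κ),
      mul_nonneg (mul_nonneg (sub_nonneg.2 hκD) hκ.le) (mul_nonneg hF hcv)]
  -- s²Gb bound
  have hsgb : 8*κ*(s^2*G*b) ≤ κ^2*(s^2*b^2) + 16*T^2 := by
    nlinarith [sq_nonneg (κ*(s*b) - 4*(s*G)),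
      mul_self_le_mul_self (by positivity : (0:ℝ) ≤ s*G) hGT]
  -- main bound on s²b²
  have hA := mul_le_mul_of_nonneg_left h2 (by positivity : (0:ℝ) ≤ 8*D*ν*κ^2)
  have hB := mul_le_mul_of_nonneg_left hb2 (by positivity : (0:ℝ) ≤ 16*D*ν*Mn)
  have hC := mul_le_mul_of_nonneg_left hFcv (by positivity : (0:ℝ) ≤ (8:ℝ)/15*ν*κ)
  have hE := mul_le_mul_of_nonneg_left hsgb (by positivity : (0:ℝ) ≤ (1:ℝ)/15*ν*κ^2 + D*ν*κ)
  have hsl1 : 0 ≤ (8:ℝ)/15*ν*κ^3*(D-Mn)*(s^2*b^2) := by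
    have : (0:ℝ) ≤ D - Mn := by linarith
    positivity
  have hsl2 : 0 ≤ (1:ℝ)/15*ν*κ^3*(D-κ)*(s^2*b^2) := by
    have : (0:ℝ) ≤ D - κ := by linarith
    positivity
  have hF2' := mul_le_mul_of_nonneg_left hF2 (by positivity : (0:ℝ) ≤ (512:ℝ)/15*ν*κ*D^2)
  have hnet : (96:ℝ)/15*D*ν*κ^3*(s^2*b^2)
      ≤ (16*D*ν*Mn*(κ+1) + 512/15*ν*κ*D^2 + 16/15*ν*κ^2 + 16*D*ν*κ) * T^2 := by
    linarith [hA, hB, hC, hE, hsl1, hsl2, hF2']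
  have hCT : 16*D*ν*Mn*(κ+1) + 512/15*ν*κ*D^2 + 16/15*ν*κ^2 + 16*D*ν*κ
      ≤ (96:ℝ)/15*D*ν*(11*D^2) := by
    have q1 : 0 ≤ 16*ν*(D*(κ+1)*(D-Mn)) :=
      mul_nonneg (by positivity) (mul_nonneg (mul_nonneg (by linarith) (by linarith)) (by linarith))
    have q2 : 0 ≤ 16*ν*(D*D*(D-(κ+1))) :=
      mul_nonneg (by positivity) (mul_nonneg (mul_nonneg (by linarith) (by linarith)) (by linarith))
    have q3 : 0 ≤ 512/15*ν*(D^2*(D-κ)) :=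
      mul_nonneg (by positivity) (mul_nonneg (by positivity) (by linarith))
    have q4 : 0 ≤ 16/15*ν*((D-κ)*(D+κ)) :=
      mul_nonneg (by positivity) (mul_nonneg (by linarith) (by linarith))
    have q5 : 0 ≤ 16/15*ν*(D^2*(D-1)) :=
      mul_nonneg (by positivity) (mul_nonneg (by positivity) (by linarith))
    have q6 : 0 ≤ 16*ν*(D*(D-κ)) :=
      mul_nonneg (by positivity) (mul_nonneg (by linarith) (by linarith))
    have q7 : 0 ≤ 16*ν*(D^2*(D-1)) :=
      mul_nonneg (by positivity) (mul_nonneg (by positivity) (by linarith))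
    have q8 : 0 ≤ 48/15*ν*(D^3) := by positivity
    linarith [q1, q2, q3, q4, q5, q6, q7, q8]
  have hsb2 : s^2*b^2 ≤ stmt17c2 κ ν Mn * T^2 := by
    rw [stmt17c2, div_mul_eq_mul_div, le_div_iff₀ (by positivity)]
    have h' := le_trans hnet (mul_le_mul_of_nonneg_right hCT (sq_nonneg T))
    rw [← hD]
    have hpos : 0 < (96:ℝ)/15*D*ν := by positivity
    have h'' : (96:ℝ)/15*D*ν * (κ^3*(s^2*b^2)) ≤ (96:ℝ)/15*D*ν * (11*D^2*T^2) := by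
      linarith [h']
    linarith [le_of_mul_le_mul_left h'' hpos]
  clear hnet hA hB hC hE hsl1 hsl2 hF2' hCT hFcv hsgb hb2' hb2 h1 h2 hG2 hF2
  have hc20 : 0 ≤ stmt17c2 κ ν Mn := by rw [stmt17c2]; positivity
  set c' := Real.sqrt (stmt17c2 κ ν Mn) with hc'
  have hc'0 : 0 ≤ c' := hc' ▸ Real.sqrt_nonneg _
  clear_value c'
  have hsb : s*b ≤ c'*T := by
    have h := Real.sq_sqrt hc20
    refine le_of_pow_le_pow_left₀ two_ne_zero (by positivity) ?_
    calc (s*b)^2 = s^2*b^2 := by ring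
    _ ≤ stmt17c2 κ ν Mn * T^2 := hsb2
    _ = (c'*T)^2 := by rw [mul_pow, hc', h]
  have hK3eq : stmt17K3 κ ν Mn = Mn * stmt17c2 κ ν Mn + stmt17c2 κ ν Mn / 2 + 1/2 := by
    rw [stmt17K3]
  set K3 := stmt17K3 κ ν Mn with hK3
  set c2 := stmt17c2 κ ν Mn with hc2
  clear_value K3 c2
  have hK30 : 0 < K3 := by rw [hK3eq]; nlinarith [mul_nonneg hMn.le hc20]
  have hcv2 : cv^2 ≤ T*cv + K3*T^2 := by
    have e1 := mul_le_mul_of_nonneg_left hsb2 hMn.le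
    have e2 := mul_le_mul_of_nonneg_right hFT hcv
    have e3 : s^2*G*b ≤ (1/2)*(s^2*b^2) + (1/2)*T^2 := by
      nlinarith [sq_nonneg (s*b - s*G),
        mul_self_le_mul_self (by positivity : (0:ℝ) ≤ s*G) hGT]
    rw [hK3eq]
    nlinarith [h3, e1, e2, e3, hsb2]
  have hcvT : cv ≤ (1+K3)*T := by
    have key : (cv - (1+K3)*T) * (cv + K3*T) ≤ 0 := by
      nlinarith [hcv2, mul_nonneg (mul_nonneg hK30.le hK30.le) (mul_nonneg hT0 hT0)]
    rcases (by positivity : (0:ℝ) ≤ cv + K3*T).eq_or_lt with h0 | h0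
    · nlinarith [mul_nonneg hK30.le hT0]
    · by_contra h'
      push_neg at h'
      nlinarith [mul_pos (by linarith : (0:ℝ) < cv - (1+K3)*T) h0]
  have hsw : s*w ≤ Mn*(c'*T) + T := by
    have := mul_le_mul_of_nonneg_left h5 hs.le
    nlinarith [hsb, mul_le_mul_of_nonneg_left hsb hMn.le]
  have hsa : s^2*a ≤ (2+K3)*T := by nlinarith
  rw [stmt17C0, ← hK3, ← hc2, ← hc']
  nlinarith [hsb, hcvT, hsw, hsa, mul_nonneg hc'0 hT0, mul_nonneg hMn.le (mul_nonneg hc'0 hT0)]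

lemma stmt17C0_pos (κ ν Mn : ℝ) (hκ : 0 < κ) (hν : 0 < ν) (hMn : 0 < Mn) :
    0 < stmt17C0 κ ν Mn := by
  have h1 : 0 ≤ stmt17c2 κ ν Mn := by rw [stmt17c2]; positivity
  have h2 : 0 ≤ stmt17K3 κ ν Mn := by
    rw [stmt17K3]; nlinarith [mul_nonneg hMn.le h1]
  have h3 : 0 ≤ Real.sqrt (stmt17c2 κ ν Mn) := Real.sqrt_nonneg _
  rw [stmt17C0]
  nlinarith [mul_nonneg (by linarith : (0:ℝ) ≤ Mn + 1) h3]

/-- maximal regularity for parabolic-type evolutionary block systems: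
let `H₁, H₂` be Hilbert spaces, `C : dom C ⊆ H₂ → H₁` densely defined and closed,
`𝔫 ∈ L(H₂)` with `Re⟨𝔫φ,φ⟩ ≥ κ‖φ‖²` (`κ > 0`).  For `λ = ν + ik` (`ν > 0` fixed,
`k ∈ ℝ`), if `U = (u₁,u₂) ∈ dom C* × dom C` solves `λu₁ + Cu₂ = f₁` and
`𝔫u₂ - C*u₁ = f₂`, then
`‖λu₁‖ + ‖λ^{1/2}u₂‖ + ‖λ^{1/2}C*u₁‖ + ‖Cu₂‖ ≤ C₀(‖f₁‖ + ‖λ^{1/2}f₂‖)`,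
with `C₀` depending only on `κ`, `ν` and `‖𝔫‖` (note `‖λ^{1/2}x‖ = |λ|^{1/2}‖x‖`). -/
theorem stmt17 (κ ν Mn : ℝ) (hκ : 0 < κ) (hν : 0 < ν) (hMn : 0 < Mn) :
    ∃ C₀ > 0,
      ∀ (H₁ : Type) (H₂ : Type)
        [NormedAddCommGroup H₁] [InnerProductSpace ℂ H₁] [CompleteSpace H₁]
        [NormedAddCommGroup H₂] [InnerProductSpace ℂ H₂] [CompleteSpace H₂]
        (C : H₂ →ₗ.[ℂ] H₁), Dense (C.domain : Set H₂) → C.IsClosed →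
      ∀ n : H₂ →L[ℂ] H₂,
        (∀ φ : H₂, κ * ‖φ‖ ^ 2 ≤ (inner ℂ (n φ) φ : ℂ).re) → ‖n‖ ≤ Mn →
      ∀ (k : ℝ) (lam : ℂ), lam = (ν : ℂ) + (k : ℂ) * I →
      ∀ (u₁ : H₁) (u₂ : H₂) (f₁ : H₁) (f₂ : H₂)
        (hu₁ : u₁ ∈ C.adjoint.domain) (hu₂ : u₂ ∈ C.domain),
        lam • u₁ + C ⟨u₂, hu₂⟩ = f₁ →
        n u₂ - C.adjoint ⟨u₁, hu₁⟩ = f₂ →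
        ‖lam‖ * ‖u₁‖ + Real.sqrt (‖lam‖) * ‖u₂‖
            + Real.sqrt (‖lam‖) * ‖C.adjoint ⟨u₁, hu₁⟩‖
            + ‖C ⟨u₂, hu₂⟩‖
          ≤ C₀ * (‖f₁‖ + Real.sqrt (‖lam‖) * ‖f₂‖) := by
  refine ⟨stmt17C0 κ ν Mn, stmt17C0_pos κ ν Mn hκ hν hMn, ?_⟩
  intro H₁ H₂ _ _ _ _ _ _ C hdense _hclosed n hn hnorm k lam hlam u₁ u₂ f₁ f₂ hu₁ hu₂ heq1 heq2
  set v : H₁ := C ⟨u₂, hu₂⟩ with hv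
  set w : H₂ := C.adjoint ⟨u₁, hu₁⟩ with hw
  set L : ℝ := ‖lam‖ with hL
  set s : ℝ := Real.sqrt L with hsdef
  have hlamre : lam.re = ν := by rw [hlam]; simp
  have hlamim : lam.im = k := by rw [hlam]; simp
  have hνL : ν ≤ L := by
    calc ν = lam.re := hlamre.symm
    _ ≤ ‖lam‖ := Complex.re_le_norm lam
  have hL0 : 0 < L := lt_of_lt_of_le hν hνL
  have hs0 : 0 < s := Real.sqrt_pos.2 hL0
  have hs2 : s^2 = L := Real.sq_sqrt hL0.le
  have hadj : (inner ℂ w u₂ : ℂ) = (inner ℂ u₁ v : ℂ) :=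
    C.adjoint_isFormalAdjoint hdense ⟨u₁, hu₁⟩ ⟨u₂, hu₂⟩
  set Z : ℂ := (inner ℂ u₁ v : ℂ) with hZ
  set M : ℂ := (inner ℂ u₂ (n u₂) : ℂ) with hM
  have hnu2 : ‖n u₂‖ ≤ Mn * ‖u₂‖ := by
    calc ‖n u₂‖ ≤ ‖n‖ * ‖u₂‖ := n.le_opNorm u₂
    _ ≤ Mn * ‖u₂‖ := mul_le_mul_of_nonneg_right hnorm (norm_nonneg _)
  have hMabs : ‖M‖ ≤ Mn * ‖u₂‖^2 := by
    calc ‖M‖ = ‖M‖ := rfl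
    _ ≤ ‖u₂‖ * ‖n u₂‖ := norm_inner_le_norm _ _
    _ ≤ ‖u₂‖ * (Mn * ‖u₂‖) := mul_le_mul_of_nonneg_left hnu2 (norm_nonneg _)
    _ = Mn * ‖u₂‖^2 := by ring
  have hMre : κ * ‖u₂‖^2 ≤ M.re := by
    have h := hn u₂
    have e : M.re = ((inner ℂ (n u₂) u₂ : ℂ)).re := by
      rw [hM, show (inner ℂ u₂ (n u₂) : ℂ) = (starRingEnd ℂ) (inner ℂ (n u₂) u₂ : ℂ) from
        (inner_conj_symm u₂ (n u₂)).symm]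
      exact Complex.conj_re _
    rw [e]; exact h
  have hMre0 : 0 ≤ M.re := le_trans (by positivity) hMre
  have hMim : |M.im| ≤ Mn * ‖u₂‖^2 := le_trans (Complex.abs_im_le_norm M) hMabs
  -- identities
  have E1 : (inner ℂ u₁ f₁ : ℂ) = lam * ((‖u₁‖ : ℂ))^2 + Z := by
    rw [← heq1, inner_add_right, inner_smul_right, inner_self_eq_norm_sq_to_K, hZ]
    exact rfl
  have E2 : (inner ℂ u₂ f₂ : ℂ) = M - (starRingEnd ℂ) Z := by
    rw [← heq2, inner_sub_right]
    congr 1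
    rw [← hadj]
    exact (inner_conj_symm u₂ w).symm
  -- energy inequality (I)
  have hIre : ν * ‖u₁‖^2 + M.re ≤ ‖f₁‖ * ‖u₁‖ + ‖f₂‖ * ‖u₂‖ := by
    have key1 : (lam * ((‖u₁‖ : ℂ))^2 + Z) + (M - (starRingEnd ℂ) Z)
        = (inner ℂ u₁ f₁ : ℂ) + (inner ℂ u₂ f₂ : ℂ) := by rw [E1, E2]
    have hre := congrArg Complex.re key1
    have hcast : (((‖u₁‖ : ℂ))^2).re = ‖u₁‖^2 ∧ (((‖u₁‖ : ℂ))^2).im = 0 := by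
      constructor <;> norm_cast
    simp only [Complex.add_re, Complex.sub_re, Complex.mul_re, Complex.conj_re,
      hlamre, hlamim, hcast.1, hcast.2, mul_zero, sub_zero] at hre
    have hb1 : ((inner ℂ u₁ f₁ : ℂ)).re ≤ ‖f₁‖ * ‖u₁‖ := by
      calc ((inner ℂ u₁ f₁ : ℂ)).re ≤ ‖(inner ℂ u₁ f₁ : ℂ)‖ := Complex.re_le_norm _
      _ = ‖(inner ℂ u₁ f₁ : ℂ)‖ := rfl
      _ ≤ ‖u₁‖ * ‖f₁‖ := norm_inner_le_norm _ _
      _ = ‖f₁‖ * ‖u₁‖ := by ring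
    have hb2 : ((inner ℂ u₂ f₂ : ℂ)).re ≤ ‖f₂‖ * ‖u₂‖ := by
      calc ((inner ℂ u₂ f₂ : ℂ)).re ≤ ‖(inner ℂ u₂ f₂ : ℂ)‖ := Complex.re_le_norm _
      _ = ‖(inner ℂ u₂ f₂ : ℂ)‖ := rfl
      _ ≤ ‖u₂‖ * ‖f₂‖ := norm_inner_le_norm _ _
      _ = ‖f₂‖ * ‖u₂‖ := by ring
    linarith [hre, hb1, hb2]
  have hI : ν*‖u₁‖^2 + κ*‖u₂‖^2 ≤ ‖f₁‖*‖u₁‖ + ‖f₂‖*‖u₂‖ := by linarith [hMre, hIre]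
  -- identity (C)
  have hsm : lam • u₁ = f₁ - v := by rw [← heq1]; abel
  have hAA : lam * (starRingEnd ℂ) Z = (inner ℂ v f₁ : ℂ) - ((‖v‖ : ℂ))^2 := by
    have h3 : (inner ℂ v (lam • u₁) : ℂ) = lam * (inner ℂ v u₁ : ℂ) := inner_smul_right _ _ _
    have h2 : (inner ℂ v (lam • u₁) : ℂ) = (inner ℂ v f₁ : ℂ) - ((‖v‖ : ℂ))^2 := by
      rw [hsm, inner_sub_right, inner_self_eq_norm_sq_to_K]
      exact rfl
    have h4 : (inner ℂ v u₁ : ℂ) = (starRingEnd ℂ) Z := by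
      rw [hZ, ← inner_conj_symm]
    rw [← h4, ← h3, h2]
  set W : ℂ := lam * (inner ℂ u₂ f₂ : ℂ) with hWdef
  have keyC : lam * M + ((‖v‖ : ℂ))^2 = (inner ℂ v f₁ : ℂ) + W := by
    rw [hWdef]
    linear_combination (-lam) * E2 + hAA
  -- bounds
  have hρ1 : ‖(inner ℂ v f₁ : ℂ)‖ ≤ ‖v‖ * ‖f₁‖ := by
    calc ‖(inner ℂ v f₁ : ℂ)‖ = ‖(inner ℂ v f₁ : ℂ)‖ := rfl
    _ ≤ ‖v‖ * ‖f₁‖ := norm_inner_le_norm _ _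
  have hρ2 : ‖W‖ ≤ L * (‖f₂‖ * ‖u₂‖) := by
    rw [hWdef, norm_mul]
    have h' : ‖(inner ℂ u₂ f₂ : ℂ)‖ ≤ ‖f₂‖ * ‖u₂‖ := by
      calc ‖(inner ℂ u₂ f₂ : ℂ)‖ = ‖(inner ℂ u₂ f₂ : ℂ)‖ := rfl
      _ ≤ ‖u₂‖ * ‖f₂‖ := norm_inner_le_norm _ _
      _ = ‖f₂‖ * ‖u₂‖ := by ring
    exact mul_le_mul_of_nonneg_left h' (norm_nonneg _)
  have hre1 := le_trans (Complex.abs_re_le_norm (inner ℂ v f₁ : ℂ)) hρ1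
  have him1 := le_trans (Complex.abs_im_le_norm (inner ℂ v f₁ : ℂ)) hρ1
  have hre2 := le_trans (Complex.abs_re_le_norm W) hρ2
  have him2 := le_trans (Complex.abs_im_le_norm W) hρ2
  have hkL : |k| ≤ L := by
    calc |k| = |lam.im| := by rw [hlamim]
    _ ≤ ‖lam‖ := Complex.abs_im_le_norm lam
  have hLν : L ≤ ν + |k| := by
    calc L ≤ |lam.re| + |lam.im| := Complex.norm_le_abs_re_add_abs_im lam
    _ = ν + |k| := by rw [hlamre, hlamim, abs_of_pos hν]
  -- real and imaginary parts of keyC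
  have hcastv : (((‖v‖ : ℂ))^2).re = ‖v‖^2 ∧ (((‖v‖ : ℂ))^2).im = 0 := by
    constructor <;> norm_cast
  have hreC := congrArg Complex.re keyC
  have himC := congrArg Complex.im keyC
  simp only [Complex.add_re, Complex.add_im, Complex.mul_re, Complex.mul_im,
    hlamre, hlamim, hcastv.1, hcastv.2] at hreC himC
  -- (III)
  have hIII : ‖v‖^2 ≤ L*Mn*‖u₂‖^2 + ‖f₁‖*‖v‖ + L*‖f₂‖*‖u₂‖ := by
    have h2 : k * M.im ≤ L * (Mn * ‖u₂‖^2) := by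
      calc k * M.im ≤ |k * M.im| := le_abs_self _
      _ = |k| * |M.im| := abs_mul _ _
      _ ≤ L * (Mn * ‖u₂‖^2) := mul_le_mul hkL hMim (abs_nonneg _) (le_trans (abs_nonneg k) hkL)
    nlinarith [hreC, mul_nonneg hν.le hMre0, abs_le.1 hre1, abs_le.1 hre2]
  -- (II)
  have hII : L*κ*‖u₂‖^2 ≤ 2*ν*Mn*‖u₂‖^2 + ‖f₁‖*‖v‖ + L*‖f₂‖*‖u₂‖ := by
    have h2 : |k * M.re| ≤ ‖v‖*‖f₁‖ + L*(‖f₂‖*‖u₂‖) + ν*(Mn*‖u₂‖^2) := by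
      refine abs_le.2 ⟨?_, ?_⟩ <;>
        [nlinarith [himC, abs_le.1 him1, abs_le.1 him2,
          mul_le_mul_of_nonneg_left (abs_le.1 hMim).2 hν.le,
          mul_le_mul_of_nonneg_left (abs_le.1 hMim).1 hν.le];
        nlinarith [himC, abs_le.1 him1, abs_le.1 him2,
          mul_le_mul_of_nonneg_left (abs_le.1 hMim).2 hν.le,
          mul_le_mul_of_nonneg_left (abs_le.1 hMim).1 hν.le]]
    have h2' : |k| * M.re ≤ ‖v‖*‖f₁‖ + L*(‖f₂‖*‖u₂‖) + ν*(Mn*‖u₂‖^2) := by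
      rw [← _root_.abs_of_nonneg hMre0, ← abs_mul]; exact h2
    have h3 : L * (κ * ‖u₂‖^2) ≤ (ν + |k|) * M.re :=
      mul_le_mul hLν hMre (by positivity) (by positivity)
    have h4 : ν * M.re ≤ ν * (Mn * ‖u₂‖^2) :=
      mul_le_mul_of_nonneg_left (le_trans (Complex.re_le_norm M) hMabs) hν.le
    nlinarith [h3, h4, h2']
  -- (IV)
  have hIV : L * ‖u₁‖ ≤ ‖f₁‖ + ‖v‖ := by
    have e : ‖lam • u₁‖ = L * ‖u₁‖ := by rw [norm_smul]
    rw [← e, hsm]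
    exact norm_sub_le _ _
  -- (V)
  have hV : ‖w‖ ≤ Mn * ‖u₂‖ + ‖f₂‖ := by
    have hweq : w = n u₂ - f₂ := by rw [← heq2]; abel
    rw [hweq]
    exact le_trans (norm_sub_le _ _) (add_le_add hnu2 le_rfl)
  -- conclude via the real lemma
  have hfin := stmt17aux κ ν Mn ‖u₁‖ ‖u₂‖ ‖v‖ ‖w‖ ‖f₁‖ ‖f₂‖ s hκ hν hMn (norm_nonneg _)
    (norm_nonneg _) (norm_nonneg _) (norm_nonneg _) (norm_nonneg _) (norm_nonneg _) hs0
    (by rw [hs2]; exact hνL) hI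
    (by rw [hs2]; exact hII) (by rw [hs2]; exact hIII)
    (by rw [hs2]; exact hIV) hV
  calc ‖lam‖ * ‖u₁‖ + Real.sqrt (‖lam‖) * ‖u₂‖
      + Real.sqrt (‖lam‖) * ‖w‖ + ‖v‖
      = s^2*‖u₁‖ + s*‖u₂‖ + s*‖w‖ + ‖v‖ := by rw [hs2]
    _ ≤ stmt17C0 κ ν Mn * (‖f₁‖ + s*‖f₂‖) := hfin
    _ = stmt17C0 κ ν Mn * (‖f₁‖ + Real.sqrt (‖lam‖) * ‖f₂‖) := rfl
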